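/- Cut-off determinacy: every register protocol P, with any initial register value d0 and any target location qf, admits a cut-off for almost-sure reachability; that is, there exists k ∈ ℕ such that either for all h ≥ k, Post*({⟨q0^h, d0⟩}) ⊆ Pre*([qf]) (positive cut-off: qf is reached almost surely for all systems of at least k processes), or for all h ≥ k, Post*({⟨q0^h, d0⟩}) ⊄ Pre*([qf]) (negative cut-off: qf is reached with probability strictly less than 1 for all systems of at least k processes). -/

import Mathlib

/-- Operation type of a register protocol: read or write. -/
inductive Op : Type
  | R : Op
  | W : Op
deriving DecidableEq

instance : Fintype Op := ⟨{Op.R, Op.W}, fun x => by cases x <;> simp⟩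

/-- A location has at least one outgoing transition. -/
def Nonblock {Q D : Type*} (T : Set (Q × Op × D × Q)) : Prop :=
  ∀ q : Q, ∃ op d q', (q, op, d, q') ∈ T

/-- Whenever a read transition exists from `q`, reads of every datum are enabled in `q`. -/
def ReadTotal {Q D : Type*} (T : Set (Q × Op × D × Q)) : Prop :=
  ∀ q d' q', (q, Op.R, d', q') ∈ T → ∀ d : D, ∃ qd, (q, Op.R, d, qd) ∈ T

/-- One step of the distributed system associated with transition set `T`:
a configuration is a pair of a finite multiset of locations and a register datum. -/
def IsStep {Q D : Type*} [DecidableEq Q] (T : Set (Q × Op × D × Q)) :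
    Multiset Q × D → Multiset Q × D → Prop := fun γ γ' =>
  ∃ q op d'' q', (q, op, d'', q') ∈ T ∧ q ∈ γ.1 ∧
    γ'.1 = γ.1 - {q} + {q'} ∧
    ((op = Op.R ∧ γ.2 = d'' ∧ γ'.2 = d'') ∨ (op = Op.W ∧ γ'.2 = d''))

/-- Reachability: reflexive-transitive closure of the step relation. -/
def Reach {Q D : Type*} [DecidableEq Q] (T : Set (Q × Op × D × Q)) :
    Multiset Q × D → Multiset Q × D → Prop :=
  Relation.ReflTransGen (IsStep T)

/-- `PostStar T S` is the set of configurations reachable from some configuration of `S`. -/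
def PostStar {Q D : Type*} [DecidableEq Q] (T : Set (Q × Op × D × Q))
    (S : Set (Multiset Q × D)) : Set (Multiset Q × D) :=
  {γ' | ∃ γ ∈ S, Reach T γ γ'}

/-- `PreStar T S` is the set of configurations from which some configuration of `S`
is reachable. -/
def PreStar {Q D : Type*} [DecidableEq Q] (T : Set (Q × Op × D × Q))
    (S : Set (Multiset Q × D)) : Set (Multiset Q × D) :=
  {γ | ∃ γ' ∈ S, Reach T γ γ'}

/-- `[qf]`: configurations containing at least one process in location `qf`. -/
def TargetSet {Q D : Type*} [DecidableEq Q] (qf : Q) : Set (Multiset Q × D) :=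
  {γ | 0 < γ.1.count qf}

/-- The order `⪯` on configurations: same register content, same support,
and componentwise smaller multiset. -/
def ConfLE {Q D : Type*} [DecidableEq Q] (γ γ' : Multiset Q × D) : Prop :=
  γ.2 = γ'.2 ∧ γ.1.toFinset = γ'.1.toFinset ∧ γ.1 ≤ γ'.1

/-- Upward closure of a set of configurations with respect to `⪯`. -/
def UpSet {Q D : Type*} [DecidableEq Q] (B : Set (Multiset Q × D)) :
    Set (Multiset Q × D) :=
  {γ' | ∃ γ ∈ B, ConfLE γ γ'}

section Aux
variable {Q D : Type*} [DecidableEq Q] {T : Set (Q × Op × D × Q)}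

lemma isStep_card {γ γ' : Multiset Q × D} (h : IsStep T γ γ') :
    Multiset.card γ'.1 = Multiset.card γ.1 := by
  obtain ⟨q, op, d'', q', ht, hq, hmul, hreg⟩ := h
  have h1 : 0 < Multiset.card γ.1 := Multiset.card_pos_iff_exists_mem.2 ⟨q, hq⟩
  have hle : ({q} : Multiset Q) ≤ γ.1 := Multiset.singleton_le.2 hq
  rw [hmul, Multiset.card_add, Multiset.card_sub hle]
  simp
  omega

lemma reach_card {γ γ' : Multiset Q × D} (h : Reach T γ γ') :
    Multiset.card γ'.1 = Multiset.card γ.1 := by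
  induction h with
  | refl => rfl
  | tail _ hstep ih => rw [isStep_card hstep, ih]

lemma reach_rep {q q' : Q} {op : Op} {d'' : D} (ht : (q, op, d'', q') ∈ T) :
    ∀ (m : ℕ) (ξ : Multiset Q), Multiset.replicate m q ≤ ξ →
      Reach T (ξ, d'') (ξ - Multiset.replicate m q + Multiset.replicate m q', d'') := by
  intro m
  induction m with
  | zero =>
    intro ξ _
    simp only [Multiset.replicate_zero, tsub_zero, add_zero]
    exact Relation.ReflTransGen.refl
  | succ m ih =>
    intro ξ hle
    have hcnt : m + 1 ≤ ξ.count q := by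
      have := Multiset.le_iff_count.1 hle q
      simpa [Multiset.count_replicate] using this
    have hq : q ∈ ξ := Multiset.count_pos.1 (by omega)
    have hstep : IsStep T (ξ, d'') (ξ - {q} + {q'}, d'') := by
      refine ⟨q, op, d'', q', ht, hq, rfl, ?_⟩
      cases op
      · exact Or.inl ⟨rfl, rfl, rfl⟩
      · exact Or.inr ⟨rfl, rfl⟩
    have hle' : Multiset.replicate m q ≤ ξ - {q} + {q'} := by
      rw [Multiset.le_iff_count]
      intro r
      simp only [Multiset.count_replicate, Multiset.count_add, Multiset.count_sub,
        Multiset.count_singleton]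
      rcases eq_or_ne q r with h1 | h1 <;> rcases eq_or_ne q' r with h2 | h2 <;>
        simp_all [Multiset.count_replicate, Multiset.count_add, Multiset.count_sub,
          Multiset.count_singleton, eq_comm] <;> omega
    have heq : (ξ - {q} + {q'}) - Multiset.replicate m q + Multiset.replicate m q'
        = ξ - Multiset.replicate (m + 1) q + Multiset.replicate (m + 1) q' := by
      ext r
      simp only [Multiset.count_replicate, Multiset.count_add, Multiset.count_sub,
        Multiset.count_singleton]
      rcases eq_or_ne q r with h1 | h1 <;> rcases eq_or_ne q' r with h2 | h2 <;>
        simp_all [Multiset.count_replicate, Multiset.count_add, Multiset.count_sub,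
          Multiset.count_singleton, eq_comm] <;> omega
    have := ih (ξ - {q} + {q'}) hle'
    rw [heq] at this
    exact Relation.ReflTransGen.head hstep this

lemma step_pump {β γ' : Multiset Q × D} {q q' : Q} {op : Op} {d'' : D}
    (ht : (q, op, d'', q') ∈ T) (hq : q ∈ β.1)
    (hmul : γ'.1 = β.1 - {q} + {q'})
    (hreg : (op = Op.R ∧ β.2 = d'' ∧ γ'.2 = d'') ∨ (op = Op.W ∧ γ'.2 = d''))
    (ε : Multiset Q) (c : ℕ) (hc : c ≤ ε.count q) :
    Reach T (β.1 + ε, β.2)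
      (γ'.1 + (ε - Multiset.replicate c q + Multiset.replicate c q'), γ'.2) := by
  have hd : γ'.2 = d'' := by rcases hreg with ⟨_, _, h⟩ | ⟨_, h⟩ <;> exact h
  have hqβ : 1 ≤ β.1.count q := Multiset.one_le_count_iff_mem.2 hq
  have hstep : IsStep T (β.1 + ε, β.2) ((β.1 + ε) - {q} + {q'}, γ'.2) := by
    refine ⟨q, op, d'', q', ht, Multiset.mem_add.2 (Or.inl hq), rfl, ?_⟩
    rcases hreg with ⟨h1, h2, h3⟩ | ⟨h1, h2⟩
    · exact Or.inl ⟨h1, h2, h3⟩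
    · exact Or.inr ⟨h1, h2⟩
  have hrep : Multiset.replicate c q ≤ (β.1 + ε) - {q} + {q'} := by
    rw [Multiset.le_iff_count]
    intro r
    simp only [Multiset.count_replicate, Multiset.count_add, Multiset.count_sub,
      Multiset.count_singleton]
    rcases eq_or_ne q r with h1 | h1 <;> rcases eq_or_ne q' r with h2 | h2 <;>
      simp_all [Multiset.count_replicate, Multiset.count_add, Multiset.count_sub,
        Multiset.count_singleton, eq_comm] <;> omega
  have hre := reach_rep ht c ((β.1 + ε) - {q} + {q'}) hrep
  have heq : ((β.1 + ε) - {q} + {q'}) - Multiset.replicate c q + Multiset.replicate c q'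
      = γ'.1 + (ε - Multiset.replicate c q + Multiset.replicate c q') := by
    rw [hmul]
    ext r
    simp only [Multiset.count_replicate, Multiset.count_add, Multiset.count_sub,
      Multiset.count_singleton]
    rcases eq_or_ne q r with h1 | h1 <;> rcases eq_or_ne q' r with h2 | h2 <;>
      simp_all [Multiset.count_replicate, Multiset.count_add, Multiset.count_sub,
        Multiset.count_singleton, eq_comm] <;> omega
  rw [heq, ← hd] at hre
  exact Relation.ReflTransGen.head hstep hre

end Aux

section Aux2
variable {Q D : Type*} [DecidableEq Q] {T : Set (Q × Op × D × Q)}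

lemma copycat_back {γ γ'' : Multiset Q × D} (h : Reach T γ γ'') :
    ∀ ε' : Multiset Q, ε'.toFinset ⊆ γ''.1.toFinset →
      ∃ ε : Multiset Q, ε.toFinset ⊆ γ.1.toFinset ∧ Multiset.card ε = Multiset.card ε' ∧
        Reach T (γ.1 + ε, γ.2) (γ''.1 + ε', γ''.2) := by
  induction h with
  | refl => exact fun ε' h => ⟨ε', h, rfl, Relation.ReflTransGen.refl⟩
  | @tail β γ' hab hbc ih =>
    intro ε' hε'
    obtain ⟨q, op, d'', q', ht, hq, hmul, hreg⟩ := hbc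
    have hqβ : 1 ≤ β.1.count q := Multiset.one_le_count_iff_mem.2 hq
    set c := ε'.count q' with hcdef
    set E := ε' - Multiset.replicate c q' + Multiset.replicate c q with hEdef
    have hEcount : ∀ r, E.count r
        = ε'.count r - (if q' = r then c else 0) + (if q = r then c else 0) := by
      intro r
      rw [hEdef]
      simp [Multiset.count_replicate, Multiset.count_sub]
    have hcE : c ≤ E.count q := by
      have := hEcount q
      rcases eq_or_ne q' q with h1 | h1 <;> simp_all <;> omega
    have hEε' : E - Multiset.replicate c q + Multiset.replicate c q' = ε' := by
      ext r
      simp only [Multiset.count_replicate, Multiset.count_add, Multiset.count_sub]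
      rw [hEcount r]
      rcases eq_or_ne q r with h1 | h1 <;> rcases eq_or_ne q' r with h2 | h2 <;>
        simp_all <;> omega
    have hsupp : E.toFinset ⊆ β.1.toFinset := by
      intro r hr
      rw [Multiset.mem_toFinset, ← Multiset.count_pos] at hr
      rw [Multiset.mem_toFinset, ← Multiset.count_pos]
      rw [hEcount r] at hr
      rcases eq_or_ne q r with rfl | h1
      · omega
      · rcases eq_or_ne q' r with h2 | h2
        · have hc2 : c = ε'.count r := by rw [hcdef, h2]
          simp only [if_pos h2, if_neg h1] at hr
          omega
        · simp only [if_neg h2, if_neg h1] at hr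
          have hrε : r ∈ ε'.toFinset := by
            rw [Multiset.mem_toFinset, ← Multiset.count_pos]; omega
          have := hε' hrε
          rw [Multiset.mem_toFinset, ← Multiset.count_pos, hmul] at this
          simp only [Multiset.count_add, Multiset.count_sub, Multiset.count_singleton] at this
          simp only [if_neg (Ne.symm h1), if_neg (Ne.symm h2)] at this
          omega
    have hcard : Multiset.card E = Multiset.card ε' := by
      have hrle : Multiset.replicate c q' ≤ ε' := by
        rw [Multiset.le_iff_count]
        intro r
        simp only [Multiset.count_replicate]
        rcases eq_or_ne q' r with h2 | h2 <;> simp [h2, hcdef] <;> omega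
      rw [hEdef, Multiset.card_add, Multiset.card_sub hrle]
      have := Multiset.count_le_card q' ε'
      simp only [Multiset.card_replicate]
      omega
    obtain ⟨ε, h1, h2, h3⟩ := ih E hsupp
    refine ⟨ε, h1, h2.trans hcard, h3.trans ?_⟩
    have := step_pump ht hq hmul hreg E c hcE
    rw [hEε'] at this
    exact this

lemma copycat_fwd {γ γ'' : Multiset Q × D} (h : Reach T γ γ'') :
    ∀ ε : Multiset Q, ε.toFinset ⊆ γ.1.toFinset →
      ∃ ε' : Multiset Q, ε'.toFinset ⊆ γ''.1.toFinset ∧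
        Reach T (γ.1 + ε, γ.2) (γ''.1 + ε', γ''.2) := by
  induction h with
  | refl => exact fun ε h => ⟨ε, h, Relation.ReflTransGen.refl⟩
  | @tail β γ' hab hbc ih =>
    intro ε hε
    obtain ⟨E, hE, hr⟩ := ih ε hε
    obtain ⟨q, op, d'', q', ht, hq, hmul, hreg⟩ := hbc
    have hqβ : 1 ≤ β.1.count q := Multiset.one_le_count_iff_mem.2 hq
    refine ⟨E - Multiset.replicate (E.count q) q + Multiset.replicate (E.count q) q', ?_,
      hr.trans (step_pump ht hq hmul hreg E (E.count q) le_rfl)⟩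
    intro r hrm
    rw [Multiset.mem_toFinset, ← Multiset.count_pos] at hrm
    rw [Multiset.mem_toFinset, ← Multiset.count_pos, hmul]
    simp only [Multiset.count_add, Multiset.count_sub, Multiset.count_replicate,
      Multiset.count_singleton] at hrm ⊢
    rcases eq_or_ne q' r with h2 | h2
    · rcases eq_or_ne q r with h1 | h1 <;> simp_all <;> omega
    · rcases eq_or_ne q r with h1 | h1
      · simp_all
      · simp only [if_neg h1, if_neg h2] at hrm
        have hrE : r ∈ E.toFinset := by
          rw [Multiset.mem_toFinset, ← Multiset.count_pos]; omega
        have := hE hrE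
        rw [Multiset.mem_toFinset, ← Multiset.count_pos] at this
        simp only [if_neg (Ne.symm h1), if_neg (Ne.symm h2)]
        omega

lemma pre_up {qf : Q} {γ γ' : Multiset Q × D} (hle : ConfLE γ γ')
    (h : γ ∈ PreStar T (TargetSet qf)) : γ' ∈ PreStar T (TargetSet qf) := by
  obtain ⟨hd, hfin, hmle⟩ := hle
  obtain ⟨γt, hγt, hreach⟩ := h
  have hsupp : (γ'.1 - γ.1).toFinset ⊆ γ.1.toFinset := by
    intro r hr
    rw [Multiset.mem_toFinset, ← Multiset.count_pos, Multiset.count_sub] at hr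
    have hmem : r ∈ γ'.1.toFinset := by
      rw [Multiset.mem_toFinset, ← Multiset.count_pos]; omega
    rwa [← hfin] at hmem
  obtain ⟨ε', hs, hrr⟩ := copycat_fwd hreach (γ'.1 - γ.1) hsupp
  have heq1 : γ.1 + (γ'.1 - γ.1) = γ'.1 := by
    rw [add_comm]; exact tsub_add_cancel_of_le hmle
  refine ⟨(γt.1 + ε', γt.2), ?_, ?_⟩
  · have hpos : 0 < γt.1.count qf := hγt
    simp only [TargetSet, Set.mem_setOf_eq, Multiset.count_add]
    omega
  · rw [heq1, hd] at hrr
    simpa using hrr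

end Aux2

lemma exists_mono_subseq_nat (u : ℕ → ℕ) :
    ∃ φ : ℕ → ℕ, StrictMono φ ∧ Monotone (u ∘ φ) := by
  have hpwo : (Set.univ : Set ℕ).IsPWO := (Set.isWF_univ_iff.2 (inferInstance : WellFoundedLT ℕ)).isPWO
  obtain ⟨g, hg⟩ := hpwo.exists_monotone_subseq (f := u) fun n => Set.mem_univ _
  exact ⟨g, g.strictMono, hg⟩

lemma exists_mono_subseq_list {Q : Type*} [DecidableEq Q] (l : List Q) (f : ℕ → Multiset Q) :
    ∃ φ : ℕ → ℕ, StrictMono φ ∧ ∀ q ∈ l, Monotone fun n => (f (φ n)).count q := by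
  induction l with
  | nil => exact ⟨id, strictMono_id, by simp⟩
  | cons q l ih =>
    obtain ⟨φ, hφ, hmono⟩ := ih
    obtain ⟨ψ, hψ, hψm⟩ := exists_mono_subseq_nat fun n => (f (φ n)).count q
    refine ⟨φ ∘ ψ, hφ.comp hψ, ?_⟩
    intro r hr
    rcases List.mem_cons.1 hr with rfl | hr
    · exact hψm
    · exact (hmono r hr).comp hψ.monotone


/-- cut-off determinacy: every register protocol, with any initial
register value `d0` and target `qf`, admits a cut-off: some `k` such that either
for all `h ≥ k` the target is reached almost surely (`Post* ⊆ Pre*`), or for all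
`h ≥ k` it is not. -/
theorem stmt_9 {Q D : Type*} [Fintype Q] [Fintype D] [DecidableEq Q]
    (T : Set (Q × Op × D × Q)) (hnb : Nonblock T) (hrt : ReadTotal T)
    (q0 qf : Q) (d0 : D) :
    ∃ k : ℕ,
      (∀ h : ℕ, k ≤ h →
        PostStar T {(Multiset.replicate h q0, d0)} ⊆ PreStar T (TargetSet qf)) ∨
      (∀ h : ℕ, k ≤ h →
        ¬ PostStar T {(Multiset.replicate h q0, d0)} ⊆ PreStar T (TargetSet qf)) := by
  classical
  by_cases hC : ∃ (δ : Multiset Q × D) (a : Q),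
      Reach T (Multiset.replicate (Multiset.card δ.1) q0, d0) δ ∧
      δ ∉ PreStar T (TargetSet qf) ∧ a ∈ δ.1.toFinset ∧
      ∀ m : ℕ, (δ.1 + Multiset.replicate m a, δ.2) ∉ PreStar T (TargetSet qf)
  · obtain ⟨δ, a, hreach, _hdead, ha, hpump⟩ := hC
    refine ⟨Multiset.card δ.1, Or.inr ?_⟩
    intro h hh hsub
    obtain ⟨ε, hεs, hεc, hr⟩ :=
      copycat_back hreach (Multiset.replicate (h - Multiset.card δ.1) a)
        (by
          intro r hrm
          rw [Multiset.mem_toFinset] at hrm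
          rw [Multiset.eq_of_mem_replicate hrm]
          exact ha)
    have hεq : ε = Multiset.replicate (h - Multiset.card δ.1) q0 := by
      have hall : ∀ b ∈ ε, b = q0 := by
        intro b hb
        have := hεs (Multiset.mem_toFinset.2 hb)
        rw [Multiset.mem_toFinset] at this
        exact Multiset.eq_of_mem_replicate this
      rw [Multiset.eq_replicate_card.2 hall, hεc, Multiset.card_replicate]
    rw [hεq] at hr
    have hrep : Multiset.replicate (Multiset.card δ.1) q0
        + Multiset.replicate (h - Multiset.card δ.1) q0 = Multiset.replicate h q0 := by
      rw [← Multiset.replicate_add]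
      congr 1
      omega
    rw [hrep] at hr
    exact hpump (h - Multiset.card δ.1)
      (hsub ⟨(Multiset.replicate h q0, d0), Set.mem_singleton _, hr⟩)
  · have key : ∃ k, ∀ h, k ≤ h →
        PostStar T {(Multiset.replicate h q0, d0)} ⊆ PreStar T (TargetSet qf) := by
      by_contra hK
      push_neg at hK
      apply hC
      have H : ∀ n : ℕ, ∃ δ : Multiset Q × D,
          Reach T (Multiset.replicate (Multiset.card δ.1) q0, d0) δ ∧
          δ ∉ PreStar T (TargetSet qf) ∧ n ≤ Multiset.card δ.1 := by
        intro n
        obtain ⟨h, hn, hns⟩ := hK n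
        rw [Set.not_subset] at hns
        obtain ⟨δ, hδ1, hδ2⟩ := hns
        obtain ⟨γ, hγ, hre⟩ := hδ1
        rw [Set.mem_singleton_iff] at hγ
        subst hγ
        have hcard : Multiset.card δ.1 = h := by simpa using reach_card hre
        rw [← hcard] at hre hn
        exact ⟨δ, hre, hδ2, hn⟩
      choose F0 hF1 hF2 hF3 using H
      set g : ℕ → D × Finset Q := fun n => ((F0 n).2, (F0 n).1.toFinset) with hg
      obtain ⟨v, hv⟩ := Finite.exists_infinite_fiber g
      have hvinf : {n | g n = v}.Infinite := by
        have h' := Set.infinite_coe_iff.1 hv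
        have he : g ⁻¹' {v} = {n | g n = v} := by ext n; simp
        rwa [he] at h'
      set p : ℕ → Prop := fun n => g n = v with hp
      have hmem : ∀ n, g (Nat.nth p n) = v := fun n => Nat.nth_mem_of_infinite hvinf n
      have hmono0 : StrictMono (Nat.nth p) := Nat.nth_strictMono hvinf
      obtain ⟨φ, hφ, hφm⟩ := exists_mono_subseq_list (Finset.univ : Finset Q).toList
        fun n => (F0 (Nat.nth p n)).1
      set F : ℕ → Multiset Q × D := fun n => F0 (Nat.nth p (φ n)) with hF
      have hFreach : ∀ n, Reach T (Multiset.replicate (Multiset.card (F n).1) q0, d0) (F n) :=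
        fun n => hF1 _
      have hFdead : ∀ n, F n ∉ PreStar T (TargetSet qf) := fun n => hF2 _
      have hFcard : ∀ n, n ≤ Multiset.card (F n).1 := by
        intro n
        have h1 : n ≤ φ n := hφ.le_apply
        have h2 : φ n ≤ Nat.nth p (φ n) := hmono0.le_apply
        have h3 := hF3 (Nat.nth p (φ n))
        show n ≤ Multiset.card (F0 (Nat.nth p (φ n))).1
        omega
      have hFreg : ∀ n, (F n).2 = v.1 := by
        intro n
        have := hmem (φ n)
        rw [hg] at this
        exact congrArg Prod.fst this
      have hFsupp : ∀ n, (F n).1.toFinset = v.2 := by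
        intro n
        have := hmem (φ n)
        rw [hg] at this
        exact congrArg Prod.snd this
      have hFmono : ∀ q : Q, Monotone fun n => ((F n).1.count q) := by
        intro q
        exact hφm q (by simp)
      have hacoord : ∃ a : Q, ∀ m : ℕ, ∃ i, m ≤ (F i).1.count a := by
        by_contra hB
        push_neg at hB
        choose B hBlt using hB
        have hbound : ∀ i, Multiset.card (F i).1 ≤ ∑ q ∈ v.2, B q := by
          intro i
          have hsum : ∑ q ∈ (F i).1.toFinset, (F i).1.count q = Multiset.card (F i).1 :=
            Multiset.toFinset_sum_count_eq _
          rw [← hsum, hFsupp i]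
          refine Finset.sum_le_sum fun q _ => ?_
          have := hBlt q i
          omega
        have h1 := hFcard (∑ q ∈ v.2, B q + 1)
        have h2 := hbound (∑ q ∈ v.2, B q + 1)
        omega
      obtain ⟨a, ha⟩ := hacoord
      have haS : a ∈ v.2 := by
        obtain ⟨i, hi⟩ := ha 1
        have : a ∈ (F i).1.toFinset := Multiset.mem_toFinset.2 (Multiset.count_pos.1 (by omega))
        rwa [hFsupp i] at this
      refine ⟨F 0, a, hFreach 0, hFdead 0, by rw [hFsupp 0]; exact haS, ?_⟩
      intro m hmem'
      obtain ⟨i, hi⟩ := ha ((F 0).1.count a + m)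
      apply hFdead i
      refine pre_up (γ := ((F 0).1 + Multiset.replicate m a, (F 0).2)) ⟨?_, ?_, ?_⟩ hmem'
      · rw [hFreg 0, hFreg i]
      · show ((F 0).1 + Multiset.replicate m a).toFinset = (F i).1.toFinset
        rw [Multiset.toFinset_add, hFsupp 0, hFsupp i]
        rcases Nat.eq_zero_or_pos m with rfl | hm
        · simp
        · rw [Multiset.toFinset_replicate]
          rw [if_neg (by omega)]
          exact Finset.union_eq_left.2 (by simpa using haS)
      · show (F 0).1 + Multiset.replicate m a ≤ (F i).1
        rw [Multiset.le_iff_count]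
        intro r
        simp only [Multiset.count_add, Multiset.count_replicate]
        rcases eq_or_ne a r with rfl | hra
        · simpa using hi
        · rw [if_neg hra]
          simpa using hFmono r (Nat.zero_le i)
    obtain ⟨k, hk⟩ := key
    exact ⟨k, Or.inl hk⟩
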